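/- If K is a Markov kernel from E to E and there exists a nonnegative measure ν on E with ν(E) ≥ d such that δ_x K ≥ ν for every x ∈ E, then for any two probability measures μ₁, μ₂ on E, the total variation distance satisfies ‖μ₁K − μ₂K‖_TV ≤ (1 − d)‖μ₁ − μ₂‖_TV. -/

import Mathlib

open MeasureTheory ProbabilityTheory

/-- Total variation distance between two (finite) measures, defined as the supremum over
measurable sets of the absolute difference of the measures (for differences of probability
measures this is half of the `sup - inf` convention of the paper, a harmless rescaling that
we use consistently). -/
noncomputable def tvDist {E : Type*} [MeasurableSpace E] (μ ν : Measure E) : ℝ :=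
  ⨆ A : {s : Set E // MeasurableSet s}, |(μ A.1).toReal - (ν A.1).toReal|

lemma tvDist_bdd {E : Type*} [MeasurableSpace E] (μ ν : Measure E)
    [IsFiniteMeasure μ] [IsFiniteMeasure ν] :
    BddAbove (Set.range fun A : {s : Set E // MeasurableSet s} =>
      |(μ A.1).toReal - (ν A.1).toReal|) := by
  refine ⟨(μ Set.univ).toReal + (ν Set.univ).toReal, ?_⟩
  rintro x ⟨A, rfl⟩
  have h1 : (μ A.1).toReal ≤ (μ Set.univ).toReal :=
    ENNReal.toReal_mono (measure_ne_top _ _) (measure_mono (Set.subset_univ _))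
  have h2 : (ν A.1).toReal ≤ (ν Set.univ).toReal :=
    ENNReal.toReal_mono (measure_ne_top _ _) (measure_mono (Set.subset_univ _))
  have := abs_sub_abs_le_abs_sub ((μ A.1).toReal) ((ν A.1).toReal)
  have h3 : |(μ A.1).toReal - (ν A.1).toReal| ≤ |(μ A.1).toReal| + |(ν A.1).toReal| :=
    abs_sub _ _
  rw [abs_of_nonneg ENNReal.toReal_nonneg, abs_of_nonneg ENNReal.toReal_nonneg] at h3
  linarith

lemma tvDist_symm {E : Type*} [MeasurableSpace E] (μ ν : Measure E) :
    tvDist μ ν = tvDist ν μ := by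
  unfold tvDist
  exact iSup_congr fun A => abs_sub_comm _ _

lemma key {E : Type*} [MeasurableSpace E] (K : Kernel E E) [IsMarkovKernel K]
    (ν : Measure E) [IsFiniteMeasure ν] (d : ℝ) (hd1 : d ≤ 1)
    (hmass : d ≤ (ν Set.univ).toReal)
    (hdom : ∀ x : E, ∀ A : Set E, MeasurableSet A → ν A ≤ K x A)
    (μ₁ μ₂ : Measure E) [IsProbabilityMeasure μ₁] [IsProbabilityMeasure μ₂]
    (A : Set E) (hA : MeasurableSet A) :
    ((μ₁.bind (fun x => K x)) A).toReal - ((μ₂.bind (fun x => K x)) A).toReal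
      ≤ (1 - d) * tvDist μ₁ μ₂ := by
  -- E is nonempty
  have hne : Nonempty E := by
    by_contra h
    rw [not_nonempty_iff] at h
    have h1 : (μ₁ : Measure E) Set.univ = 1 := measure_univ
    rw [Set.univ_eq_empty_iff.2 h, measure_empty] at h1
    exact zero_ne_one h1
  obtain ⟨x₀⟩ := hne
  -- ν is dominated by probability, so ν univ ≤ 1
  have hν_le_one : ∀ B, ν B ≤ 1 := fun B => by
    calc ν B ≤ ν Set.univ := measure_mono (Set.subset_univ _)
    _ ≤ K x₀ Set.univ := hdom x₀ _ MeasurableSet.univ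
    _ = 1 := measure_univ
  have hνA_ne : ν A ≠ ⊤ := measure_ne_top _ _
  set a : ℝ := (ν A).toReal with ha
  set b : ℝ := 1 - (ν Aᶜ).toReal with hb
  set g : E → ℝ := fun x => (K x A).toReal with hg
  have hKmeas : Measurable fun x => K x A := K.measurable_coe hA
  have hg_meas : Measurable g := hKmeas.ennreal_toReal
  have hKx_ne : ∀ x, K x A ≠ ⊤ := fun x => measure_ne_top _ _
  have hKxc_ne : ∀ x, K x Aᶜ ≠ ⊤ := fun x => measure_ne_top _ _
  -- pointwise bounds
  have hga : ∀ x, a ≤ g x := fun x =>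
    ENNReal.toReal_mono (hKx_ne x) (hdom x A hA)
  have hgb : ∀ x, g x ≤ b := by
    intro x
    have hsum : K x A + K x Aᶜ = 1 := by
      rw [measure_add_measure_compl hA, measure_univ]
    have hsum' : (K x A).toReal + (K x Aᶜ).toReal = 1 := by
      rw [← ENNReal.toReal_add (hKx_ne x) (hKxc_ne x), hsum, ENNReal.toReal_one]
    have hc : (ν Aᶜ).toReal ≤ (K x Aᶜ).toReal :=
      ENNReal.toReal_mono (hKxc_ne x) (hdom x Aᶜ hA.compl)
    simp only [hg, hb]
    linarith
  have hg01 : ∀ x, 0 ≤ g x := fun x => ENNReal.toReal_nonneg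
  have hg1 : ∀ x, g x ≤ 1 := fun x => by
    have h1 := hgb x
    have h2 : (0:ℝ) ≤ (ν Aᶜ).toReal := ENNReal.toReal_nonneg
    linarith [hb]
  -- integrability
  have hg_int : ∀ (μ : Measure E) [IsFiniteMeasure μ], Integrable g μ := by
    intro μ _
    refine (integrable_const (1 : ℝ)).mono' hg_meas.aestronglyMeasurable ?_
    filter_upwards with x
    rw [Real.norm_eq_abs, abs_of_nonneg (hg01 x)]
    exact hg1 x
  -- bind apply as real integral
  have hbind : ∀ (μ : Measure E) [IsFiniteMeasure μ],
      ((μ.bind (fun x => K x)) A).toReal = ∫ x, g x ∂μ := by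
    intro μ _
    rw [Measure.bind_apply hA (K.measurable.aemeasurable)]
    rw [← integral_toReal hKmeas.aemeasurable]
    filter_upwards with x
    exact lt_of_le_of_ne (le_top) (hKx_ne x)
  -- Hahn decomposition
  obtain ⟨S, hS, hS1, hS2⟩ := hahn_decomposition (μ := μ₁) (ν := μ₂)
  have hrestr1 : μ₂.restrict S ≤ μ₁.restrict S := by
    refine Measure.le_iff.2 fun t ht => ?_
    rw [Measure.restrict_apply ht, Measure.restrict_apply ht]
    exact hS1 _ (ht.inter hS) Set.inter_subset_right
  have hrestr2 : μ₁.restrict Sᶜ ≤ μ₂.restrict Sᶜ := by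
    refine Measure.le_iff.2 fun t ht => ?_
    rw [Measure.restrict_apply ht, Measure.restrict_apply ht]
    exact hS2 _ (ht.inter hS.compl) Set.inter_subset_right
  set Δ : ℝ := (μ₁ S).toReal - (μ₂ S).toReal with hΔ
  have hΔ0 : 0 ≤ Δ := by
    have := hS1 S hS (le_refl _)
    have := ENNReal.toReal_mono (measure_ne_top μ₁ _) this
    simp only [hΔ]; linarith
  -- complement masses
  have hcompl : ∀ (μ : Measure E) [IsProbabilityMeasure μ],
      (μ Sᶜ).toReal = 1 - (μ S).toReal := by
    intro μ _
    have hsum : μ S + μ Sᶜ = 1 := by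
      rw [measure_add_measure_compl hS, measure_univ]
    have : (μ S).toReal + (μ Sᶜ).toReal = 1 := by
      rw [← ENNReal.toReal_add (measure_ne_top _ _) (measure_ne_top _ _), hsum,
        ENNReal.toReal_one]
    linarith
  -- Bound on S
  have hb_int : ∀ (μ : Measure E) (T : Set E) [IsFiniteMeasure μ] (c : ℝ),
      ∫ x in T, (c - g x) ∂μ = c * (μ T).toReal - ∫ x in T, g x ∂μ := by
    intro μ T _ c
    rw [integral_sub (integrable_const c) ((hg_int μ).restrict), setIntegral_const,
      smul_eq_mul, measureReal_def]
    ring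
  have hboundS : ∫ x in S, g x ∂μ₁ - ∫ x in S, g x ∂μ₂ ≤ b * Δ := by
    have hmono : ∫ x in S, (b - g x) ∂μ₂ ≤ ∫ x in S, (b - g x) ∂μ₁ := by
      refine integral_mono_measure hrestr1 ?_ ?_
      · refine Filter.Eventually.of_forall fun x => ?_
        simp only [Pi.zero_apply]
        linarith [hgb x]
      · exact (integrable_const b).sub ((hg_int μ₁).restrict)
    rw [hb_int μ₂ S b, hb_int μ₁ S b] at hmono
    simp only [hΔ]
    linarith
  have hboundSc : ∫ x in Sᶜ, g x ∂μ₁ - ∫ x in Sᶜ, g x ∂μ₂ ≤ a * (-Δ) := by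
    have hmono : ∫ x in Sᶜ, (g x - a) ∂μ₁ ≤ ∫ x in Sᶜ, (g x - a) ∂μ₂ := by
      refine integral_mono_measure hrestr2 ?_ ?_
      · refine Filter.Eventually.of_forall fun x => ?_
        simp only [Pi.zero_apply]
        linarith [hga x]
      · exact ((hg_int μ₂).restrict).sub (integrable_const a)
    have e1 : ∫ x in Sᶜ, (g x - a) ∂μ₁ = ∫ x in Sᶜ, g x ∂μ₁ - a * (μ₁ Sᶜ).toReal := by
      rw [integral_sub ((hg_int μ₁).restrict) (integrable_const a), setIntegral_const,
        smul_eq_mul, measureReal_def]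
      ring
    have e2 : ∫ x in Sᶜ, (g x - a) ∂μ₂ = ∫ x in Sᶜ, g x ∂μ₂ - a * (μ₂ Sᶜ).toReal := by
      rw [integral_sub ((hg_int μ₂).restrict) (integrable_const a), setIntegral_const,
        smul_eq_mul, measureReal_def]
      ring
    rw [e1, e2, hcompl μ₁, hcompl μ₂] at hmono
    simp only [hΔ] at *
    linarith
  -- combine
  have hsplit : ∀ (μ : Measure E) [IsFiniteMeasure μ],
      ∫ x in S, g x ∂μ + ∫ x in Sᶜ, g x ∂μ = ∫ x, g x ∂μ := by
    intro μ _
    exact integral_add_compl hS (hg_int μ)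
  have hba : b - a = 1 - (ν Set.univ).toReal := by
    have hsum : ν A + ν Aᶜ = ν Set.univ := measure_add_measure_compl hA
    have : (ν A).toReal + (ν Aᶜ).toReal = (ν Set.univ).toReal := by
      rw [← ENNReal.toReal_add (measure_ne_top _ _) (measure_ne_top _ _), hsum]
    simp only [ha, hb]
    linarith
  have hba_le : b - a ≤ 1 - d := by rw [hba]; linarith
  have hνu1 : (ν Set.univ).toReal ≤ 1 := by
    have h := ENNReal.toReal_mono ENNReal.one_ne_top (hν_le_one Set.univ)
    rwa [ENNReal.toReal_one] at h
  have hba0 : 0 ≤ b - a := by rw [hba]; linarith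
  have hΔtv : Δ ≤ tvDist μ₁ μ₂ := by
    have h1 : Δ ≤ |(μ₁ S).toReal - (μ₂ S).toReal| := le_abs_self _
    have h2 : |(μ₁ S).toReal - (μ₂ S).toReal| ≤ tvDist μ₁ μ₂ :=
      le_ciSup (tvDist_bdd μ₁ μ₂) ⟨S, hS⟩
    linarith
  have hfin : (1 - d) * tvDist μ₁ μ₂ ≥ (b - a) * Δ :=
    mul_le_mul hba_le hΔtv hΔ0 (by linarith)
  rw [hbind μ₁, hbind μ₂, ← hsplit μ₁, ← hsplit μ₂]
  nlinarith [hfin, hboundS, hboundSc]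

/-- If `K` is a Markov kernel and there is a nonnegative measure `ν` with mass at least `d`
such that `δ_x K ≥ ν` for all `x`, then `‖μ₁K − μ₂K‖_TV ≤ (1 − d)‖μ₁ − μ₂‖_TV`. -/
theorem stmt0 {E : Type*} [MeasurableSpace E] (K : Kernel E E) [IsMarkovKernel K]
    (ν : Measure E) [IsFiniteMeasure ν] (d : ℝ) (hd0 : 0 ≤ d) (hd1 : d ≤ 1)
    (hmass : d ≤ (ν Set.univ).toReal)
    (hdom : ∀ x : E, ∀ A : Set E, MeasurableSet A → ν A ≤ K x A)
    (μ₁ μ₂ : Measure E) [IsProbabilityMeasure μ₁] [IsProbabilityMeasure μ₂] :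
    tvDist (μ₁.bind (fun x => K x)) (μ₂.bind (fun x => K x)) ≤ (1 - d) * tvDist μ₁ μ₂ := by
  haveI : Nonempty {s : Set E // MeasurableSet s} := ⟨⟨∅, MeasurableSet.empty⟩⟩
  unfold tvDist
  refine ciSup_le fun A => ?_
  rw [abs_sub_le_iff]
  constructor
  · have h := key K ν d hd1 hmass hdom μ₁ μ₂ A.1 A.2
    unfold tvDist at h; exact h
  · have h := key K ν d hd1 hmass hdom μ₂ μ₁ A.1 A.2
    rw [tvDist_symm μ₂ μ₁] at h
    unfold tvDist at h; exact h
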